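/- Consider a word equation s = t where every variable occurring in t occurs exactly once in the whole equation s = t (a weak equation). If there exists a feasible language assignment Lang refining the given assignment Lang₀ such that Lang(s) ⊆ Lang(t), then the system s = t ∧ ⋀_x x ∈ Lang₀(x) has a solution; conversely, a solution yields such an assignment. -/

import Mathlib

lemma lang_mem_list_prod_iff {Γ : Type*} (L : List (Language Γ)) (w : List Γ) :
    w ∈ L.prod ↔ ∃ us : List (List Γ),
      List.Forall₂ (· ∈ ·) us L ∧ us.flatten = w := by
  induction L generalizing w with
  | nil =>
    constructor
    · intro h
      exact ⟨[], List.Forall₂.nil, by simpa [Language.mem_one] using h.symm⟩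
    · rintro ⟨us, hus, rfl⟩
      cases hus
      simp [Language.mem_one]
  | cons l L ih =>
    constructor
    · intro h
      rw [List.prod_cons] at h
      obtain ⟨a, ha, b, hb, rfl⟩ := h
      obtain ⟨us, hus, rfl⟩ := (ih b).mp hb
      exact ⟨a :: us, List.Forall₂.cons ha hus, rfl⟩
    · rintro ⟨us, hus, rfl⟩
      cases hus with
      | cons ha hus =>
        rw [List.prod_cons]
        exact ⟨_, ha, _, (ih _).mpr ⟨_, hus, rfl⟩, rfl⟩

/-- Weak equations: let `s = t` be a word equation where every variable
occurring in `t` occurs exactly once in the whole equation `s = t`.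
There is a feasible language assignment `Lang` refining `Lang₀` with
`Lang(s) ⊆ Lang(t)` iff the system `s = t ∧ ⋀_x x ∈ Lang₀(x)` has
a solution. -/
theorem weak_equation_solution_iff {X Γ : Type*} [DecidableEq X]
    (s t : List X) (Lang₀ : X → Language Γ)
    (hweak : ∀ x ∈ t, (s ++ t).count x = 1) :
    (∃ Lang : X → Language Γ,
        (∀ x, (∃ w, w ∈ Lang x) ∧ ∀ w ∈ Lang x, w ∈ Lang₀ x) ∧
        (s.map Lang).prod ≤ (t.map Lang).prod) ↔
    (∃ ν : X → List Γ, (∀ x, ν x ∈ Lang₀ x) ∧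
        (s.map ν).flatten = (t.map ν).flatten) := by
  -- facts from hweak
  have hst : ∀ x ∈ t, x ∉ s := by
    intro x hx hxs
    have h := hweak x hx
    rw [List.count_append] at h
    have h1 : 1 ≤ s.count x := List.count_pos_iff.mpr hxs
    have h2 : 1 ≤ t.count x := List.count_pos_iff.mpr hx
    omega
  have hnodup : t.Nodup := by
    rw [List.nodup_iff_count_le_one]
    intro x
    by_cases hx : x ∈ t
    · have h := hweak x hx
      rw [List.count_append] at h
      omega
    · simp [List.count_eq_zero_of_not_mem hx]
  constructor
  · rintro ⟨Lang, hfeas, hsub⟩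
    choose w0 hw0 using fun x => (hfeas x).1
    have hw : (s.map w0).flatten ∈ (s.map Lang).prod := by
      rw [lang_mem_list_prod_iff]
      exact ⟨s.map w0, List.forall₂_map_right_iff.mpr
        (List.forall₂_map_left_iff.mpr (by
          rw [List.forall₂_same]; exact fun x _ => hw0 x)), rfl⟩
    obtain ⟨us, hus, hflat⟩ := (lang_mem_list_prod_iff _ _).mp (hsub hw)
    have hlen : us.length = t.length := by
      simpa using hus.length_eq
    have hmem : ∀ i (h : i < t.length), us[i]'(hlen ▸ h) ∈ Lang t[i] := by
      intro i h
      have := List.forall₂_iff_get.mp hus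
      have h2 := this.2 i (hlen ▸ h) (by simpa using h)
      simpa using h2
    set ν : X → List Γ := fun x => if x ∈ t then us.getD (t.idxOf x) [] else w0 x with hν
    have hνLang : ∀ x, ν x ∈ Lang x := by
      intro x
      by_cases hx : x ∈ t
      · have hlt : t.idxOf x < t.length := List.idxOf_lt_length_iff.mpr hx
        have := hmem (t.idxOf x) hlt
        rw [List.getElem_idxOf hlt] at this
        simp only [hν, if_pos hx]
        rwa [List.getD_eq_getElem _ _ (hlen ▸ hlt)]
      · simp only [hν, if_neg hx]; exact hw0 x
    refine ⟨ν, fun x => (hfeas x).2 _ (hνLang x), ?_⟩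
    have hsν : s.map ν = s.map w0 := by
      apply List.map_congr_left
      intro x hx
      have : x ∉ t := fun h => hst x h hx
      simp [hν, this]
    have htν : t.map ν = us := by
      apply List.ext_getElem (by simp [hlen])
      intro i h1 h2
      rw [List.getElem_map]
      have hti : t[i]'(by simpa using h1) ∈ t := List.getElem_mem _
      simp only [hν, if_pos hti]
      rw [List.Nodup.idxOf_getElem hnodup, List.getD_eq_getElem _ _ h2]
    rw [hsν, htν, hflat]
  · rintro ⟨ν, hν, heq⟩
    refine ⟨fun x => {ν x}, fun x => ⟨⟨ν x, rfl⟩, by rintro w rfl; exact hν x⟩, ?_⟩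
    have key : ∀ l : List X, ((l.map fun x => ({ν x} : Language Γ)).prod)
        = {(l.map ν).flatten} := by
      intro l
      induction l with
      | nil => simp [Language.mem_one]; rfl
      | cons a l ih =>
        simp only [List.map_cons, List.prod_cons, ih, List.flatten_cons]
        ext w
        constructor
        · rintro ⟨u, rfl, v, rfl, rfl⟩; rfl
        · rintro rfl; exact ⟨_, rfl, _, rfl, rfl⟩
    rw [key, key, heq]
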